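/- In a category C with finite limits, if an ind-object Y of C is strict (representable by a filtered system of monomorphisms), then Y is semi-strict: for any two morphisms X → Y and Z → Y from compact objects X, Z, the fiber product X ×_Y Z in Ind(C) is compact. -/

import Mathlib

open CategoryTheory CategoryTheory.Limits

universe v u

variable {C : Type u} [Category.{v} C]

/-- An object of `Ind C` is compact if it lies in the essential image of `C`. -/
noncomputable def IndCompact (X : Ind C) : Prop :=
  ∃ c : C, Nonempty (X ≅ Ind.yoneda.obj c)

/-- A morphism `f : X ⟶ Y` in `Ind C` is proper if for any `g : Z ⟶ Y` with `Z` compact,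
the pullback `X ×_Y Z` is compact. -/
noncomputable def IsProper [HasPullbacks (Ind C)] {X Y : Ind C} (f : X ⟶ Y) : Prop :=
  ∀ (Z : Ind C) (g : Z ⟶ Y), IndCompact Z → IndCompact (pullback f g)

/-- An ind-object `Y` is semi-strict if any map from a compact object to `Y` is proper. -/
noncomputable def IsSemiStrict [HasPullbacks (Ind C)] (Y : Ind C) : Prop :=
  ∀ (X : Ind C) (f : X ⟶ Y), IndCompact X → IsProper f

/-- An ind-object `Y` is strict if any map from a compact object to `Y` factors through a
compact object by a monomorphism. -/
noncomputable def IsStrict (Y : Ind C) : Prop :=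
  ∀ (X : Ind C) (f : X ⟶ Y), IndCompact X →
    ∃ (W : Ind C) (g : X ⟶ W) (i : W ⟶ Y), IndCompact W ∧ Mono i ∧ g ≫ i = f


lemma indYoneda_preservesLimitsOfShape (J : Type*) [Category J] :
    PreservesLimitsOfShape J (Ind.yoneda (C := C)) := by
  have h1 : PreservesLimitsOfShape J (Ind.yoneda ⋙ Ind.inclusion C) :=
    preservesLimitsOfShape_of_natIso (Ind.yonedaCompInclusion (C := C)).symm
  have h2 : ReflectsLimitsOfSize.{0, 0} (Ind.inclusion C) :=
    fullyFaithful_reflectsLimits _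
  exact preservesLimitsOfShape_of_reflects_of_preserves Ind.yoneda (Ind.inclusion C)

lemma indCompact_pullback [HasFiniteLimits C] [HasPullbacks (Ind C)]
    {X Z W : Ind C} (a : X ⟶ W) (b : Z ⟶ W)
    (hX : IndCompact X) (hZ : IndCompact Z) (hW : IndCompact W) :
    IndCompact (pullback a b) := by
  obtain ⟨x, ⟨eX⟩⟩ := hX
  obtain ⟨z, ⟨eZ⟩⟩ := hZ
  obtain ⟨w, ⟨eW⟩⟩ := hW
  haveI := indYoneda_preservesLimitsOfShape (C := C) WalkingCospan
  let a' : Ind.yoneda.obj x ⟶ Ind.yoneda.obj w := eX.inv ≫ a ≫ eW.hom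
  let b' : Ind.yoneda.obj z ⟶ Ind.yoneda.obj w := eZ.inv ≫ b ≫ eW.hom
  have key : IndCompact (pullback a' b') := by
    refine ⟨pullback (Ind.yoneda.preimage a') (Ind.yoneda.preimage b'),
      ⟨pullback.congrHom (Functor.map_preimage _ _).symm (Functor.map_preimage _ _).symm ≪≫
        (PreservesPullback.iso Ind.yoneda _ _).symm⟩⟩
  obtain ⟨p, ⟨ep⟩⟩ := key
  refine ⟨p, ⟨?_ ≪≫ ep⟩⟩
  exact asIso (pullback.map a b a' b' eX.hom eZ.hom eW.hom
    (by simp [a']) (by simp [b']))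

theorem ind_exists_factor (Y : Ind C) {c : C}
    (f : Ind.yoneda.obj c ⟶ colimit (Y.presentation.F ⋙ Ind.yoneda)) :
    ∃ (i : Y.presentation.I) (v : c ⟶ Y.presentation.F.obj i),
      Ind.yoneda.map v ≫ colimit.ι (Y.presentation.F ⋙ Ind.yoneda) i = f := by
  let incl := Ind.inclusion C
  let G := Y.presentation.F ⋙ Ind.yoneda
  let α : incl.obj (Ind.yoneda.obj c) ≅ yoneda.obj c := Ind.yonedaCompInclusion.app c
  let β : incl.obj (colimit G) ≅ colimit (G ⋙ incl) := preservesColimitIso incl G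
  let η : G ⋙ incl ≅ Y.presentation.F ⋙ yoneda :=
    Functor.isoWhiskerLeft Y.presentation.F Ind.yonedaCompInclusion
  let γ : colimit (G ⋙ incl) ≅ colimit (Y.presentation.F ⋙ yoneda) := HasColimit.isoOfNatIso η
  let w : yoneda.obj c ⟶ colimit (Y.presentation.F ⋙ yoneda) :=
    α.inv ≫ incl.map f ≫ β.hom ≫ γ.hom
  obtain ⟨i, y, hy⟩ := FunctorToTypes.jointly_surjective'.{v, v}
    (Y.presentation.F ⋙ yoneda) _ (yonedaEquiv w)
  refine ⟨i, y, ?_⟩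
  have hw : yoneda.map y ≫ colimit.ι (Y.presentation.F ⋙ yoneda) i = w := by
    apply yonedaEquiv.injective
    rw [yonedaEquiv_comp, yonedaEquiv_yoneda_map]
    exact hy.symm
  apply incl.map_injective
  have h1 : incl.map f = α.hom ≫ w ≫ γ.inv ≫ β.inv := by
    simp [w]
  have h2 : colimit.ι (Y.presentation.F ⋙ yoneda) i ≫ γ.inv =
      η.inv.app i ≫ colimit.ι (G ⋙ incl) i :=
    HasColimit.isoOfNatIso_ι_inv η i
  have h3 : colimit.ι (G ⋙ incl) i ≫ β.inv = incl.map (colimit.ι G i) :=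
    ι_preservesColimitIso_inv incl G i
  have h4 : incl.map (Ind.yoneda.map y) = α.hom ≫ yoneda.map y ≫ η.inv.app i := by
    have hn := Ind.yonedaCompInclusion.hom.naturality y
    simp only [Functor.comp_map] at hn
    rw [show α.hom = Ind.yonedaCompInclusion.hom.app c from rfl,
      show η.inv.app i = Ind.yonedaCompInclusion.inv.app (Y.presentation.F.obj i) from rfl,
      ← Category.assoc, ← hn, Category.assoc]
    simp
    rfl
  rw [Functor.map_comp, h4, h1, ← hw]
  simp only [Category.assoc]
  slice_rhs 3 4 => rw [h2]
  slice_rhs 4 5 => rw [h3]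

theorem ind_exists_common_factor (Y : Ind C) {c d : C}
    (f : Ind.yoneda.obj c ⟶ Y) (g : Ind.yoneda.obj d ⟶ Y) :
    ∃ (e : C) (t : Ind.yoneda.obj e ⟶ Y) (f₁ : c ⟶ e) (g₁ : d ⟶ e),
      Ind.yoneda.map f₁ ≫ t = f ∧ Ind.yoneda.map g₁ ≫ t = g := by
  let iso := Ind.colimitPresentationCompYoneda Y
  obtain ⟨i, v, hv⟩ := ind_exists_factor Y (f ≫ iso.inv)
  obtain ⟨j, u, hu⟩ := ind_exists_factor Y (g ≫ iso.inv)
  refine ⟨Y.presentation.F.obj (IsFiltered.max i j),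
    colimit.ι (Y.presentation.F ⋙ Ind.yoneda) (IsFiltered.max i j) ≫ iso.hom,
    v ≫ Y.presentation.F.map (IsFiltered.leftToMax i j),
    u ≫ Y.presentation.F.map (IsFiltered.rightToMax i j), ?_, ?_⟩
  · have hc : (Y.presentation.F ⋙ Ind.yoneda).map (IsFiltered.leftToMax i j) ≫
        colimit.ι (Y.presentation.F ⋙ Ind.yoneda) (IsFiltered.max i j) =
        colimit.ι (Y.presentation.F ⋙ Ind.yoneda) i :=
      colimit.w (Y.presentation.F ⋙ Ind.yoneda) (IsFiltered.leftToMax i j)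
    rw [Functor.map_comp, Category.assoc, ← Category.assoc (Ind.yoneda.map
      (Y.presentation.F.map (IsFiltered.leftToMax i j))), show Ind.yoneda.map
      (Y.presentation.F.map (IsFiltered.leftToMax i j)) = (Y.presentation.F ⋙
      Ind.yoneda).map (IsFiltered.leftToMax i j) from rfl, ← Category.assoc, ← Category.assoc,
      Category.assoc _ _ (colimit.ι _ _), hc, hv]
    simp [iso]
  · have hc : (Y.presentation.F ⋙ Ind.yoneda).map (IsFiltered.rightToMax i j) ≫
        colimit.ι (Y.presentation.F ⋙ Ind.yoneda) (IsFiltered.max i j) =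
        colimit.ι (Y.presentation.F ⋙ Ind.yoneda) j :=
      colimit.w (Y.presentation.F ⋙ Ind.yoneda) (IsFiltered.rightToMax i j)
    rw [Functor.map_comp, Category.assoc, ← Category.assoc (Ind.yoneda.map
      (Y.presentation.F.map (IsFiltered.rightToMax i j))), show Ind.yoneda.map
      (Y.presentation.F.map (IsFiltered.rightToMax i j)) = (Y.presentation.F ⋙
      Ind.yoneda).map (IsFiltered.rightToMax i j) from rfl, ← Category.assoc, ← Category.assoc,
      Category.assoc _ _ (colimit.ι _ _), hc, hu]
    simp [iso]

/-- In a category `C` with finite limits, if an ind-object `Y` is strict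
(representable by a filtered system of monomorphisms) then it is semi-strict: for any two
morphisms `X ⟶ Y` and `Z ⟶ Y` from compact objects, the fiber product `X ×_Y Z` in
`Ind C` is compact. -/
theorem stmt_7 [HasFiniteLimits C] [HasPullbacks (Ind C)] (Y : Ind C) (h : IsStrict Y) :
    IsSemiStrict Y := by
  intro X f hX Z g hZ
  obtain ⟨c, ⟨eX⟩⟩ := hX
  obtain ⟨d, ⟨eZ⟩⟩ := hZ
  obtain ⟨e, t, f₁, g₁, hf, hg⟩ := ind_exists_common_factor Y (eX.inv ≫ f) (eZ.inv ≫ g)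
  obtain ⟨W, u, i, hW, hmono, hui⟩ := h (Ind.yoneda.obj e) t ⟨e, ⟨Iso.refl _⟩⟩
  haveI := hmono
  have hfa : f = (eX.hom ≫ Ind.yoneda.map f₁ ≫ u) ≫ i := by
    have : eX.inv ≫ f = Ind.yoneda.map f₁ ≫ u ≫ i := by rw [← hui] at hf; exact hf.symm
    simp only [Category.assoc]
    rw [← this]
    simp
  have hgb : g = (eZ.hom ≫ Ind.yoneda.map g₁ ≫ u) ≫ i := by
    have : eZ.inv ≫ g = Ind.yoneda.map g₁ ≫ u ≫ i := by rw [← hui] at hg; exact hg.symm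
    simp only [Category.assoc]
    rw [← this]
    simp
  have hcompact : IndCompact (pullback (eX.hom ≫ Ind.yoneda.map f₁ ≫ u)
      (eZ.hom ≫ Ind.yoneda.map g₁ ≫ u)) :=
    indCompact_pullback _ _ ⟨c, ⟨eX⟩⟩ ⟨d, ⟨eZ⟩⟩ hW
  obtain ⟨p, ⟨ep⟩⟩ := hcompact
  have hl := pullbackIsPullbackOfCompMono (eX.hom ≫ Ind.yoneda.map f₁ ≫ u)
    (eZ.hom ≫ Ind.yoneda.map g₁ ≫ u) i
  refine ⟨p, ⟨?_ ≪≫ ep⟩⟩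
  refine pullback.congrHom hfa hgb ≪≫ ?_
  exact limit.isoLimitCone ⟨_, hl⟩
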